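/- arXiv:1401.5375 — 2 statements merged into one kernel-verified Lean document; each statement's English description precedes it below -/
import Mathlib

section
/- Let A be an n×n real symmetric positive semidefinite matrix and Γ an n×n real symmetric positive definite matrix. Then for every v ∈ ℝⁿ, ‖Γ^{-1/2} v‖ ≤ ‖(A+Γ)^{1/2} Γ^{-1/2}‖² · ‖Γ^{1/2} (A+Γ)^{-1} v‖. In particular, if ρ < 1/‖(A+Γ)^{1/2} Γ^{-1/2}‖², then ρ ‖Γ^{-1/2} v‖ ≤ ‖Γ^{1/2} (A+Γ)^{-1} v‖ for every v ∈ ℝⁿ. -/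
open Matrix

/-- The positive semidefinite square root of a positive semidefinite matrix
(the definition Mathlib had under this name; it has since been removed). -/
noncomputable def Matrix.PosSemidef.sqrt {n : Type*} [Fintype n] [DecidableEq n] {𝕜 : Type*}
    [RCLike 𝕜] [PartialOrder 𝕜] {A : Matrix n n 𝕜} (hA : A.PosSemidef) : Matrix n n 𝕜 :=
  hA.1.eigenvectorUnitary.1 * diagonal ((↑) ∘ (√·) ∘ hA.1.eigenvalues) *
  (star hA.1.eigenvectorUnitary : Matrix n n 𝕜)

/-- The Euclidean norm of a vector in `ℝⁿ`. -/
noncomputable def euclNorm {k : ℕ} (v : Fin k → ℝ) : ℝ :=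
  ‖(WithLp.equiv 2 (Fin k → ℝ)).symm v‖

/-- The operator (spectral) norm of a matrix, induced by the Euclidean norms. -/
noncomputable def l2OpNorm {k l : ℕ} (A : Matrix (Fin k) (Fin l) ℝ) : ℝ :=
  ‖LinearMap.toContinuousLinearMap (Matrix.toEuclideanLin A)‖

section aux

open scoped Matrix.Norms.L2Operator

lemma sqrt_mul_self_real {n : Type*} [Fintype n] [DecidableEq n] {A : Matrix n n ℝ}
    (hA : A.PosSemidef) : hA.sqrt * hA.sqrt = A := by
  have hU : (star hA.1.eigenvectorUnitary : Matrix n n ℝ) * hA.1.eigenvectorUnitary.1 = 1 :=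
    Unitary.coe_star_mul_self _
  conv_rhs => rw [hA.1.spectral_theorem, Unitary.conjStarAlgAut_apply]
  unfold Matrix.PosSemidef.sqrt
  rw [show ∀ a b c d e f : Matrix n n ℝ, a * b * c * (d * e * f) = a * b * (c * d) * e * f by
    intros; simp only [Matrix.mul_assoc], hU, Matrix.mul_one, Matrix.mul_assoc (hA.1.eigenvectorUnitary.1),
    diagonal_mul_diagonal]
  congr 3
  funext i
  simp [Real.mul_self_sqrt (hA.eigenvalues_nonneg i)]

lemma sqrt_transpose_real {n : Type*} [Fintype n] [DecidableEq n] {A : Matrix n n ℝ}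
    (hA : A.PosSemidef) : hA.sqrtᵀ = hA.sqrt := by
  unfold Matrix.PosSemidef.sqrt
  rw [transpose_mul, transpose_mul, diagonal_transpose, Matrix.mul_assoc]
  have h1 : ((star hA.1.eigenvectorUnitary : Matrix n n ℝ))ᵀ = hA.1.eigenvectorUnitary.1 := by
    rw [star_eq_conjTranspose, conjTranspose_eq_transpose_of_trivial, transpose_transpose]
  have h2 : (hA.1.eigenvectorUnitary.1)ᵀ = (star hA.1.eigenvectorUnitary : Matrix n n ℝ) := by
    rw [star_eq_conjTranspose, conjTranspose_eq_transpose_of_trivial]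
  rw [h1, h2]

lemma l2OpNorm_eq {k l : ℕ} (A : Matrix (Fin k) (Fin l) ℝ) : l2OpNorm A = ‖A‖ := rfl

lemma euclNorm_mulVec_le {k l : ℕ} (M : Matrix (Fin k) (Fin l) ℝ) (v : Fin l → ℝ) :
    euclNorm (M *ᵥ v) ≤ l2OpNorm M * euclNorm v :=
  M.l2_opNorm_mulVec ((WithLp.equiv 2 (Fin l → ℝ)).symm v)

lemma euclNorm_nonneg {k : ℕ} (v : Fin k → ℝ) : 0 ≤ euclNorm v := norm_nonneg _

lemma l2OpNorm_nonneg {k l : ℕ} (A : Matrix (Fin k) (Fin l) ℝ) : 0 ≤ l2OpNorm A :=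
  norm_nonneg _

lemma l2OpNorm_transpose {k : ℕ} (M : Matrix (Fin k) (Fin k) ℝ) :
    l2OpNorm Mᵀ = l2OpNorm M := by
  rw [l2OpNorm_eq, l2OpNorm_eq, ← Matrix.l2_opNorm_conjTranspose M]
  congr 1

end aux

/-- for `A` symmetric positive semidefinite and `Γ` symmetric positive definite,
`‖Γ^{-1/2} v‖ ≤ ‖(A+Γ)^{1/2} Γ^{-1/2}‖² ‖Γ^{1/2}(A+Γ)^{-1} v‖` for every `v`; in particular,
if `ρ < 1/‖(A+Γ)^{1/2} Γ^{-1/2}‖²` then `ρ‖Γ^{-1/2} v‖ ≤ ‖Γ^{1/2}(A+Γ)^{-1} v‖` for every `v`. -/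
theorem discrepancy_lower_bound {n : ℕ}
    (A Γ : Matrix (Fin n) (Fin n) ℝ) (hA : A.PosSemidef) (hΓ : Γ.PosDef) :
    (∀ v : Fin n → ℝ,
      euclNorm ((hΓ.posSemidef.sqrt)⁻¹ *ᵥ v) ≤
        l2OpNorm ((Matrix.PosDef.posSemidef_add hA hΓ).posSemidef.sqrt *
            (hΓ.posSemidef.sqrt)⁻¹) ^ 2 *
          euclNorm (hΓ.posSemidef.sqrt *ᵥ (A + Γ)⁻¹ *ᵥ v)) ∧
    ∀ ρ : ℝ,
      ρ < 1 / l2OpNorm ((Matrix.PosDef.posSemidef_add hA hΓ).posSemidef.sqrt *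
          (hΓ.posSemidef.sqrt)⁻¹) ^ 2 →
      ∀ v : Fin n → ℝ,
        ρ * euclNorm ((hΓ.posSemidef.sqrt)⁻¹ *ᵥ v) ≤
          euclNorm (hΓ.posSemidef.sqrt *ᵥ (A + Γ)⁻¹ *ᵥ v) := by
  set S := hΓ.posSemidef.sqrt with hS
  set hB : (A + Γ).PosDef := Matrix.PosDef.posSemidef_add hA hΓ with hBdef
  set T := hB.posSemidef.sqrt with hT
  set c := l2OpNorm (T * S⁻¹) with hc
  -- invertibility facts
  have hSdet : IsUnit S.det := by
    have h2 : S.det * S.det = Γ.det := by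
      rw [← Matrix.det_mul, sqrt_mul_self_real hΓ.posSemidef]
    have : Γ.det ≠ 0 := ne_of_gt hΓ.det_pos
    exact isUnit_iff_ne_zero.mpr (fun h => this (by rw [← h2, h, mul_zero]))
  have hBdet : IsUnit (A + Γ).det := isUnit_iff_ne_zero.mpr (ne_of_gt hB.det_pos)
  -- the key matrix identity
  have hkey : ∀ v : Fin n → ℝ,
      S⁻¹ *ᵥ v = (S⁻¹ * T) *ᵥ ((T * S⁻¹) *ᵥ (S *ᵥ ((A + Γ)⁻¹ *ᵥ v))) := by
    intro v
    have hm : S⁻¹ * T * (T * S⁻¹) * S * (A + Γ)⁻¹ = S⁻¹ := by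
      calc S⁻¹ * T * (T * S⁻¹) * S * (A + Γ)⁻¹
        _ = S⁻¹ * (T * T) * (S⁻¹ * S) * (A + Γ)⁻¹ := by
            simp only [Matrix.mul_assoc]
        _ = S⁻¹ * (A + Γ) * (A + Γ)⁻¹ := by
            rw [sqrt_mul_self_real hB.posSemidef, Matrix.nonsing_inv_mul S hSdet, Matrix.mul_one]
        _ = S⁻¹ := by
            rw [Matrix.mul_assoc, Matrix.mul_nonsing_inv _ hBdet, Matrix.mul_one]
    rw [Matrix.mulVec_mulVec, Matrix.mulVec_mulVec, Matrix.mulVec_mulVec, hm]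
  -- norm of the transposed factor
  have htr : l2OpNorm (S⁻¹ * T) = c := by
    rw [hc, ← l2OpNorm_transpose (T * S⁻¹)]
    congr 1
    rw [Matrix.transpose_mul, Matrix.transpose_nonsing_inv]
    have hSt : Sᵀ = S := by
      exact sqrt_transpose_real _
    have hTt : Tᵀ = T := by
      exact sqrt_transpose_real _
    rw [hSt, hTt]
  have main : ∀ v : Fin n → ℝ,
      euclNorm (S⁻¹ *ᵥ v) ≤ c ^ 2 * euclNorm (S *ᵥ (A + Γ)⁻¹ *ᵥ v) := by
    intro v
    rw [hkey v]
    calc euclNorm ((S⁻¹ * T) *ᵥ ((T * S⁻¹) *ᵥ (S *ᵥ ((A + Γ)⁻¹ *ᵥ v))))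
        ≤ l2OpNorm (S⁻¹ * T) * euclNorm ((T * S⁻¹) *ᵥ (S *ᵥ ((A + Γ)⁻¹ *ᵥ v))) :=
          euclNorm_mulVec_le _ _
      _ ≤ l2OpNorm (S⁻¹ * T) * (c * euclNorm (S *ᵥ ((A + Γ)⁻¹ *ᵥ v))) := by
          apply mul_le_mul_of_nonneg_left (euclNorm_mulVec_le _ _) (l2OpNorm_nonneg _)
      _ = c ^ 2 * euclNorm (S *ᵥ (A + Γ)⁻¹ *ᵥ v) := by
          rw [htr]; ring
  refine ⟨main, ?_⟩
  intro ρ hρ v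
  rcases le_or_gt ρ 0 with h0 | h0
  · exact le_trans (mul_nonpos_of_nonpos_of_nonneg h0 (euclNorm_nonneg _))
      (euclNorm_nonneg _)
  · have hcpos : 0 < c ^ 2 := by
      rcases (sq_nonneg c).eq_or_lt with h | h
      · exfalso
        rw [← h] at hρ
        simp at hρ
        linarith
      · exact h
    have h1 : ρ * c ^ 2 < 1 := by
      rw [lt_div_iff₀ hcpos] at hρ
      linarith [hρ]
    calc ρ * euclNorm (S⁻¹ *ᵥ v)
        ≤ ρ * (c ^ 2 * euclNorm (S *ᵥ (A + Γ)⁻¹ *ᵥ v)) :=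
          mul_le_mul_of_nonneg_left (main v) (le_of_lt h0)
      _ = (ρ * c ^ 2) * euclNorm (S *ᵥ (A + Γ)⁻¹ *ᵥ v) := by ring
      _ ≤ 1 * euclNorm (S *ᵥ (A + Γ)⁻¹ *ᵥ v) :=
          mul_le_mul_of_nonneg_right (le_of_lt h1) (euclNorm_nonneg _)
      _ = _ := one_mul _
end

section
/- Let A be an m×m real symmetric positive semidefinite matrix and Γ an m×m real symmetric positive definite matrix, and let b ∈ ℝᵐ. Then α Γ^{1/2} (A + α Γ)^{-1} b converges to Γ^{-1/2} b as α → ∞. Consequently, for every ρ with 0 < ρ < 1 and every b ≠ 0, there exists N ∈ ℕ such that α = 2^N satisfies ρ‖Γ^{-1/2} b‖ ≤ α‖Γ^{1/2}(A + α Γ)^{-1} b‖. -/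
open Matrix Filter

/-- The positive semidefinite square root of a positive semidefinite matrix (the definition of
the former `Matrix.PosSemidef.sqrt`, removed from Mathlib). -/
noncomputable def posSemidefSqrt {n : Type*} [Fintype n] [DecidableEq n]
    {A : Matrix n n ℝ} (hA : A.PosSemidef) : Matrix n n ℝ :=
  (hA.1.eigenvectorUnitary : Matrix n n ℝ) * diagonal ((↑) ∘ Real.sqrt ∘ hA.1.eigenvalues) *
    (star hA.1.eigenvectorUnitary : Matrix n n ℝ)

lemma posSemidefSqrt_mul_self {n : Type*} [Fintype n] [DecidableEq n]
    {A : Matrix n n ℝ} (hA : A.PosSemidef) : posSemidefSqrt hA * posSemidefSqrt hA = A := by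
  have hU : (star hA.1.eigenvectorUnitary : Matrix n n ℝ) * hA.1.eigenvectorUnitary = 1 :=
    Unitary.coe_star_mul_self _
  have hD : diagonal ((fun x : ℝ => x) ∘ Real.sqrt ∘ hA.1.eigenvalues) *
      diagonal ((fun x : ℝ => x) ∘ Real.sqrt ∘ hA.1.eigenvalues) =
      diagonal (RCLike.ofReal ∘ hA.1.eigenvalues) := by
    rw [diagonal_mul_diagonal]
    congr 1
    funext i
    simp [Real.mul_self_sqrt (hA.eigenvalues_nonneg i)]
  conv_rhs => rw [hA.1.spectral_theorem, Unitary.conjStarAlgAut_apply]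
  unfold posSemidefSqrt
  rw [← hD]
  simp only [mul_assoc]
  rw [← mul_assoc _ (hA.1.eigenvectorUnitary : Matrix n n ℝ), hU, one_mul]

lemma posSemidefSqrt_conjTranspose {n : Type*} [Fintype n] [DecidableEq n]
    {A : Matrix n n ℝ} (hA : A.PosSemidef) : (posSemidefSqrt hA)ᴴ = posSemidefSqrt hA := by
  unfold posSemidefSqrt
  rw [conjTranspose_mul, conjTranspose_mul, diagonal_conjTranspose, Matrix.star_eq_conjTranspose,
    conjTranspose_conjTranspose, star_trivial, mul_assoc]

lemma euclNorm_smul {k : ℕ} (c : ℝ) (hc : 0 ≤ c) (v : Fin k → ℝ) :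
    euclNorm (c • v) = c * euclNorm v := by
  unfold euclNorm
  rw [WithLp.equiv_symm_apply, WithLp.toLp_smul, norm_smul, Real.norm_eq_abs, abs_of_nonneg hc]

lemma euclNorm_continuous {k : ℕ} : Continuous (euclNorm (k := k)) :=
  continuous_norm.comp (PiLp.continuous_toLp _ _)

lemma euclNorm_pos {k : ℕ} {v : Fin k → ℝ} (hv : v ≠ 0) : 0 < euclNorm v := by
  unfold euclNorm
  rw [norm_pos_iff]
  intro h
  exact hv (by simpa using congrArg (WithLp.equiv 2 (Fin k → ℝ)) h)

/-- `α Γ^{1/2}(A + αΓ)⁻¹ b → Γ^{-1/2} b` as `α → ∞`; consequently, for every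
`ρ ∈ (0,1)` and `b ≠ 0` there is `N ∈ ℕ` such that `α = 2^N` satisfies the discrepancy
condition `ρ‖Γ^{-1/2} b‖ ≤ α‖Γ^{1/2}(A + αΓ)⁻¹ b‖`. -/
theorem doubling_reaches_discrepancy {m : ℕ} (A Γ : Matrix (Fin m) (Fin m) ℝ)
    (hA : A.PosSemidef) (hΓ : Γ.PosDef) (b : Fin m → ℝ) :
    Tendsto (fun α : ℝ => α • (posSemidefSqrt hΓ.posSemidef *ᵥ (A + α • Γ)⁻¹ *ᵥ b))
      atTop (nhds ((posSemidefSqrt hΓ.posSemidef)⁻¹ *ᵥ b)) ∧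
    ∀ ρ : ℝ, 0 < ρ → ρ < 1 → b ≠ 0 →
      ∃ N : ℕ,
        ρ * euclNorm ((posSemidefSqrt hΓ.posSemidef)⁻¹ *ᵥ b) ≤
          (2 : ℝ) ^ N *
            euclNorm (posSemidefSqrt hΓ.posSemidef *ᵥ (A + ((2 : ℝ) ^ N) • Γ)⁻¹ *ᵥ b) := by
  set S := posSemidefSqrt hΓ.posSemidef with hSdef
  have hS : Sᴴ = S := posSemidefSqrt_conjTranspose _
  have hSS : S * S = Γ := posSemidefSqrt_mul_self _
  have hdetS : IsUnit S.det := by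
    rw [isUnit_iff_ne_zero]
    intro h
    have h2 : Γ.det = 0 := by rw [← hSS, det_mul, h, mul_zero]
    exact (ne_of_gt hΓ.det_pos) h2
  set B := S⁻¹ * A * S⁻¹ with hBdef
  have hB : B.PosSemidef := by
    have h := hA.conjTranspose_mul_mul_same S⁻¹
    rwa [conjTranspose_nonsing_inv, hS] at h
  set w := S⁻¹ *ᵥ b with hwdef
  have key : ∀ α : ℝ, 0 < α →
      α • (S *ᵥ (A + α • Γ)⁻¹ *ᵥ b) = (α⁻¹ • B + 1)⁻¹ *ᵥ w := by
    intro α hα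
    have h1 : (α • (1 : Matrix (Fin m) (Fin m) ℝ)).PosDef := by
      rw [smul_one_eq_diagonal]
      exact .diagonal fun _ => hα
    have hBα : (B + α • 1).PosDef := Matrix.PosDef.posSemidef_add hB h1
    have hBαdet : IsUnit (B + α • 1).det := isUnit_iff_ne_zero.mpr (ne_of_gt hBα.det_pos)
    have hfact : A + α • Γ = S * (B + α • 1) * S := by
      rw [Matrix.mul_add, Matrix.add_mul]
      congr 1
      · rw [hBdef, ← mul_assoc, ← mul_assoc, Matrix.mul_nonsing_inv _ hdetS, one_mul,
          mul_assoc, Matrix.nonsing_inv_mul _ hdetS, mul_one]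
      · rw [Matrix.mul_smul, mul_one, Matrix.smul_mul, hSS]
    have hsmul : (α⁻¹ • B + 1)⁻¹ = α • (B + α • 1)⁻¹ := by
      refine Matrix.inv_eq_right_inv ?_
      have heq : α⁻¹ • B + 1 = α⁻¹ • (B + α • 1) := by
        rw [smul_add, smul_smul, inv_mul_cancel₀ hα.ne', one_smul]
      rw [heq, Matrix.smul_mul, Matrix.mul_smul, smul_smul, inv_mul_cancel₀ hα.ne',
        Matrix.mul_nonsing_inv _ hBαdet, one_smul]
    rw [hfact, Matrix.mul_inv_rev, Matrix.mul_inv_rev, hsmul, mulVec_mulVec,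
      ← mul_assoc, Matrix.mul_nonsing_inv _ hdetS, one_mul, ← mulVec_mulVec,
      smul_mulVec, ← hwdef]
  have htop : Tendsto (fun α : ℝ => α • (S *ᵥ (A + α • Γ)⁻¹ *ᵥ b)) atTop (nhds w) := by
    have h0 : Tendsto (fun α : ℝ => α⁻¹ • B + 1) atTop
        (nhds ((1 : Matrix (Fin m) (Fin m) ℝ))) := by
      have := ((tendsto_inv_atTop_zero (𝕜 := ℝ) : Tendsto (fun x : ℝ => x⁻¹) atTop
        (nhds 0)).smul_const B).add_const (1 : Matrix (Fin m) (Fin m) ℝ)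
      simpa using this
    have hinv1 : ContinuousAt Inv.inv (1 : Matrix (Fin m) (Fin m) ℝ) := by
      refine continuousAt_matrix_inv _ ?_
      have := NormedRing.inverse_continuousAt (1 : ℝˣ)
      rw [det_one]; simpa using this
    have h2 : Tendsto (fun α : ℝ => (α⁻¹ • B + 1)⁻¹) atTop
        (nhds ((1 : Matrix (Fin m) (Fin m) ℝ))) := by
      have := (hinv1.tendsto).comp h0
      simpa [Function.comp_def] using this
    have h3 : Tendsto (fun α : ℝ => (α⁻¹ • B + 1)⁻¹ *ᵥ w) atTop (nhds w) := by
      have hc : Continuous fun M : Matrix (Fin m) (Fin m) ℝ => M *ᵥ w :=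
        continuous_id.matrix_mulVec continuous_const
      have := (hc.continuousAt (x := (1 : Matrix (Fin m) (Fin m) ℝ))).tendsto.comp h2
      simpa [one_mulVec, Function.comp_def] using this
    refine h3.congr' ?_
    filter_upwards [eventually_gt_atTop (0 : ℝ)] with α hα
    exact (key α hα).symm
  refine ⟨htop, ?_⟩
  intro ρ hρ0 hρ1 hb
  have hw : w ≠ 0 := by
    intro h
    apply hb
    have : S *ᵥ w = b := by
      rw [hwdef, mulVec_mulVec, Matrix.mul_nonsing_inv _ hdetS, one_mulVec]
    rw [← this, h, mulVec_zero]
  have hwpos : 0 < euclNorm w := euclNorm_pos hw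
  have hnt : Tendsto (fun α : ℝ => euclNorm (α • (S *ᵥ (A + α • Γ)⁻¹ *ᵥ b))) atTop
      (nhds (euclNorm w)) := (euclNorm_continuous.continuousAt.tendsto).comp htop
  have hlt : ρ * euclNorm w < euclNorm w := by nlinarith
  have hev : ∀ᶠ α : ℝ in atTop,
      ρ * euclNorm w < euclNorm (α • (S *ᵥ (A + α • Γ)⁻¹ *ᵥ b)) :=
    hnt.eventually (eventually_gt_nhds hlt)
  obtain ⟨a, ha⟩ := eventually_atTop.mp (hev.and (eventually_gt_atTop 0))
  obtain ⟨N, hN⟩ := pow_unbounded_of_one_lt a (one_lt_two (α := ℝ))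
  refine ⟨N, ?_⟩
  obtain ⟨h1, h2⟩ := ha ((2 : ℝ) ^ N) hN.le
  rw [euclNorm_smul _ h2.le] at h1
  exact h1.le
end
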